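/- Let Ω = diag(α², α, 1) with α = e^{2πi/3}. If a 3×3 complex matrix B satisfies Ω B conj(Ω) = η B with η³ = 1 and some diagonal entry of B is nonzero, then B is a diagonal matrix. -/

import Mathlib

open Matrix Complex

noncomputable section

def α : ℂ := Complex.exp (2 * Real.pi * Complex.I / 3)

def Ω : Matrix (Fin 3) (Fin 3) ℂ := Matrix.diagonal ![α ^ 2, α, 1]

lemma hprim : IsPrimitiveRoot α 3 := by
  have := Complex.isPrimitiveRoot_exp 3 (by norm_num)
  simpa [α] using this

lemma hα3 : α ^ 3 = 1 := hprim.pow_eq_one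

lemma hα1 : α ≠ 1 := hprim.ne_one (by norm_num)

lemma hα2 : α ^ 2 ≠ 1 := hprim.pow_ne_one_of_pos_of_lt (by norm_num) (by norm_num)

lemma hstar : (starRingEnd ℂ) α = α ^ 2 := by
  have habs : ‖α‖ = 1 := by
    simp [α, Complex.norm_exp]
  have h1 : α⁻¹ = (starRingEnd ℂ) α := Complex.inv_eq_conj habs
  rw [← h1]
  exact (eq_inv_of_mul_eq_one_left (by linear_combination hα3)).symm

/-- If `Ω B conj(Ω) = η B` with `η³ = 1` and some diagonal entry of `B` is
nonzero, then `B` is diagonal. -/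
theorem stmt6 (B : Matrix (Fin 3) (Fin 3) ℂ) (η : ℂ) (hη : η ^ 3 = 1)
    (h : Ω * B * Ω.map (starRingEnd ℂ) = η • B)
    (hdiag : B 0 0 ≠ 0 ∨ B 1 1 ≠ 0 ∨ B 2 2 ≠ 0) :
    ∀ i j, i ≠ j → B i j = 0 := by
  have h3 : α ^ 3 = 1 := hα3
  have e : ∀ i j : Fin 3, (![α ^ 2, α, 1] i) * B i j * (starRingEnd ℂ) (![α ^ 2, α, 1] j)
      = η * B i j := by
    intro i j
    have := congrFun (congrFun h i) j
    fin_cases i <;> fin_cases j <;>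
      simpa [Ω, Matrix.mul_apply, Fin.sum_univ_three, Matrix.diagonal, Matrix.map_apply]
        using this
  have e00 := e 0 0
  have e11 := e 1 1
  have e22 := e 2 2
  simp only [Matrix.cons_val_zero, Matrix.cons_val_one, Matrix.head_cons, Matrix.cons_val_two,
    Matrix.tail_cons, map_pow, hstar, _root_.map_one] at e00 e11 e22
  -- η = 1
  have hη1 : η = 1 := by
    rcases hdiag with hd | hd | hd
    · have : (η - 1) * B 0 0 = 0 := by linear_combination -e00 + (α ^ 3 + 1) * B 0 0 * h3
      rcases mul_eq_zero.mp this with h' | h'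
      · exact sub_eq_zero.mp h'
      · exact absurd h' hd
    · have : (η - 1) * B 1 1 = 0 := by linear_combination -e11 + B 1 1 * h3
      rcases mul_eq_zero.mp this with h' | h'
      · exact sub_eq_zero.mp h'
      · exact absurd h' hd
    · have : (η - 1) * B 2 2 = 0 := by linear_combination -e22
      rcases mul_eq_zero.mp this with h' | h'
      · exact sub_eq_zero.mp h'
      · exact absurd h' hd
  subst hη1
  -- off-diagonal
  have hne1 : α - 1 ≠ 0 := sub_ne_zero.mpr hα1
  have hne2 : α ^ 2 - 1 ≠ 0 := sub_ne_zero.mpr hα2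
  have e01 := e 0 1
  have e02 := e 0 2
  have e10 := e 1 0
  have e12 := e 1 2
  have e20 := e 2 0
  have e21 := e 2 1
  simp only [Matrix.cons_val_zero, Matrix.cons_val_one, Matrix.head_cons, Matrix.cons_val_two,
    Matrix.tail_cons, map_pow, hstar, _root_.map_one] at e01 e02 e10 e12 e20 e21
  intro i j hij
  have k01 : (α - 1) * B 0 1 = 0 := by linear_combination e01 - α * B 0 1 * h3
  have k02 : (α ^ 2 - 1) * B 0 2 = 0 := by linear_combination e02
  have k10 : (α ^ 2 - 1) * B 1 0 = 0 := by linear_combination e10 - α ^ 2 * B 1 0 * h3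
  have k12 : (α - 1) * B 1 2 = 0 := by linear_combination e12
  have k20 : (α - 1) * B 2 0 = 0 := by linear_combination e20 - α * B 2 0 * h3
  have k21 : (α ^ 2 - 1) * B 2 1 = 0 := by linear_combination e21
  fin_cases i <;> fin_cases j <;> first
    | exact absurd rfl hij
    | exact (mul_eq_zero.mp k01).resolve_left hne1
    | exact (mul_eq_zero.mp k02).resolve_left hne2
    | exact (mul_eq_zero.mp k10).resolve_left hne2
    | exact (mul_eq_zero.mp k12).resolve_left hne1
    | exact (mul_eq_zero.mp k20).resolve_left hne1
    | exact (mul_eq_zero.mp k21).resolve_left hne2
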